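/- Let f ∈ L²(ℝ, ℂ). For h > 0 let f_h : ℤ → ℂ be the discretization f_h(n) = (1/h)∫_{nh}^{(n+1)h} f(x) dx, and let p_h f_h : ℝ → ℂ be its piecewise linear interpolation, defined by (p_h f_h)(x) = f_h(n) + h⁻¹(f_h(n+1) − f_h(n))·(x − nh) for x ∈ [nh, (n+1)h). Then ‖p_h f_h − f‖_{L²(ℝ)} → 0 as h → 0⁺. -/

import Mathlib

open MeasureTheory Filter Topology intervalIntegral Set Metric
open scoped ENNReal NNReal

namespace InterpAux



noncomputable def disc (f : ℝ → ℂ) (h : ℝ) (n : ℤ) : ℂ :=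
  (1 / h : ℂ) * ∫ x in ((n : ℝ) * h)..(((n : ℝ) + 1) * h), f x

noncomputable def interp (f : ℝ → ℂ) (h : ℝ) (x : ℝ) : ℂ :=
  disc f h ⌊x / h⌋ +
    (h⁻¹ : ℂ) * (disc f h (⌊x / h⌋ + 1) - disc f h ⌊x / h⌋) * ((x - (⌊x / h⌋ : ℝ) * h : ℝ) : ℂ)

variable {h : ℝ} {u g : ℝ → ℂ} {n : ℤ} {x : ℝ}

lemma floor_eq (hh : 0 < h) (hx : x ∈ Ico ((n : ℝ) * h) (((n : ℝ) + 1) * h)) :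
    ⌊x / h⌋ = n := by
  obtain ⟨h1, h2⟩ := hx
  rw [Int.floor_eq_iff]
  constructor
  · rw [le_div_iff₀ hh]; linarith
  · rw [div_lt_iff₀ hh]; push_cast; linarith

lemma interp_eq_combo (hh : 0 < h) (hx : x ∈ Ico ((n : ℝ) * h) (((n : ℝ) + 1) * h)) :
    interp u h x = ((1 - (x - n * h) / h : ℝ) : ℂ) * disc u h n
      + (((x - n * h) / h : ℝ) : ℂ) * disc u h (n + 1) := by
  rw [interp, floor_eq hh hx]
  have hc : (h : ℂ) ≠ 0 := by exact_mod_cast hh.ne'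
  push_cast
  field_simp
  ring

lemma t_mem (hh : 0 < h) (hx : x ∈ Ico ((n : ℝ) * h) (((n : ℝ) + 1) * h)) :
    0 ≤ (x - n * h) / h ∧ (x - n * h) / h < 1 := by
  obtain ⟨h1, h2⟩ := hx
  constructor
  · apply div_nonneg _ hh.le; linarith
  · rw [div_lt_one hh]; linarith

lemma norm_combo_le {a b : ℂ} {t r : ℝ} (ht0 : 0 ≤ t) (ht1 : t ≤ 1)
    (ha : ‖a‖ ≤ r) (hb : ‖b‖ ≤ r) :
    ‖((1 - t : ℝ) : ℂ) * a + ((t : ℝ) : ℂ) * b‖ ≤ r := by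
  calc ‖((1 - t : ℝ) : ℂ) * a + ((t : ℝ) : ℂ) * b‖
      ≤ ‖((1 - t : ℝ) : ℂ) * a‖ + ‖((t : ℝ) : ℂ) * b‖ := norm_add_le _ _
    _ = (1 - t) * ‖a‖ + t * ‖b‖ := by
        rw [norm_mul, norm_mul, Complex.norm_real, Complex.norm_real,
          Real.norm_eq_abs, Real.norm_eq_abs, abs_of_nonneg (by linarith),
          abs_of_nonneg ht0]
    _ ≤ (1 - t) * r + t * r := by
        apply add_le_add
        · exact mul_le_mul_of_nonneg_left ha (by linarith)
        · exact mul_le_mul_of_nonneg_left hb ht0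
    _ = r := by ring

lemma interp_measurable (hh : 0 < h) : Measurable (interp u h) := by
  have hfl : Measurable fun x : ℝ => ⌊x / h⌋ :=
    (measurable_id.div_const h).floor
  have h1 : Measurable fun x : ℝ => disc u h ⌊x / h⌋ :=
    (measurable_from_top (f := disc u h)).comp hfl
  have h2 : Measurable fun x : ℝ =>
      (h⁻¹ : ℂ) * (disc u h (⌊x / h⌋ + 1) - disc u h ⌊x / h⌋) :=
    (measurable_from_top
      (f := fun n => (h⁻¹ : ℂ) * (disc u h (n + 1) - disc u h n))).comp hfl
  have h3 : Measurable fun x : ℝ => ((x - (⌊x / h⌋ : ℝ) * h : ℝ) : ℂ) := by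
    apply Complex.measurable_ofReal.comp
    exact measurable_id.sub
      (((measurable_from_top (f := fun n : ℤ => (n : ℝ))).comp hfl).mul_const h)
  exact h1.add (h2.mul h3)



lemma rpow_two' (x : ℝ≥0∞) : x ^ (2 : ℝ) = x ^ (2 : ℕ) := by
  rw [show ((2:ℝ)) = ((2:ℕ):ℝ) by norm_num, ENNReal.rpow_natCast]

lemma sq4 (a b : ℝ≥0∞) : (a + b) ^ (2 : ℝ) ≤ 4 * (a ^ (2 : ℝ) + b ^ (2 : ℝ)) := by
  rw [rpow_two', rpow_two', rpow_two']
  rcases le_total a b with hab | hab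
  · calc (a + b) ^ (2:ℕ) ≤ (b + b) ^ (2:ℕ) := by
          gcongr
      _ = 4 * b ^ (2:ℕ) := by ring
      _ ≤ 4 * (a ^ (2:ℕ) + b ^ (2:ℕ)) := by
          gcongr; exact le_add_self
  · calc (a + b) ^ (2:ℕ) ≤ (a + a) ^ (2:ℕ) := by gcongr
      _ = 4 * a ^ (2:ℕ) := by ring
      _ ≤ 4 * (a ^ (2:ℕ) + b ^ (2:ℕ)) := by gcongr; exact le_self_add

lemma iUnion_Ico_eq (hh : 0 < h) :
    (⋃ n : ℤ, Ico ((n : ℝ) * h) (((n : ℝ) + 1) * h)) = univ := by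
  ext x
  simp only [mem_iUnion, mem_Ico, mem_univ, iff_true]
  refine ⟨⌊x / h⌋, ?_, ?_⟩
  · calc (⌊x / h⌋ : ℝ) * h ≤ (x / h) * h := by
          exact mul_le_mul_of_nonneg_right (Int.floor_le _) hh.le
      _ = x := div_mul_cancel₀ x hh.ne'
  · calc x = (x / h) * h := (div_mul_cancel₀ x hh.ne').symm
      _ < ((⌊x / h⌋ : ℝ) + 1) * h := by
          exact mul_lt_mul_of_pos_right (Int.lt_floor_add_one _) hh

lemma iUnion_Ioc_eq (hh : 0 < h) :
    (⋃ n : ℤ, Ioc ((n : ℝ) * h) (((n : ℝ) + 1) * h)) = univ := by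
  ext x
  simp only [mem_iUnion, mem_Ioc, mem_univ, iff_true]
  refine ⟨⌈x / h⌉ - 1, ?_, ?_⟩
  · push_cast
    calc ((⌈x / h⌉ : ℝ) - 1) * h < (x / h) * h := by
          exact mul_lt_mul_of_pos_right (by linarith [Int.ceil_lt_add_one (x / h)]) hh
      _ = x := div_mul_cancel₀ x hh.ne'
  · push_cast
    calc x = (x / h) * h := (div_mul_cancel₀ x hh.ne').symm
      _ ≤ ((⌈x / h⌉ : ℝ) - 1 + 1) * h := by
          apply mul_le_mul_of_nonneg_right _ hh.le
          rw [sub_add_cancel]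
          exact Int.le_ceil _
  
lemma pairwise_Ico (hh : 0 < h) :
    Pairwise (Function.onFun Disjoint
      fun n : ℤ => Ico ((n : ℝ) * h) (((n : ℝ) + 1) * h)) := by
  intro m n hmn
  apply Set.disjoint_left.2
  intro x hx hx'
  rcases lt_or_gt_of_ne hmn with hlt | hlt
  · have : ((m : ℝ) + 1) ≤ (n : ℝ) := by exact_mod_cast hlt
    have := hx.2; have := hx'.1
    nlinarith
  · have : ((n : ℝ) + 1) ≤ (m : ℝ) := by exact_mod_cast hlt
    have := hx.1; have := hx'.2
    nlinarith

lemma pairwise_Ioc (hh : 0 < h) :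
    Pairwise (Function.onFun Disjoint
      fun n : ℤ => Ioc ((n : ℝ) * h) (((n : ℝ) + 1) * h)) := by
  intro m n hmn
  apply Set.disjoint_left.2
  intro x hx hx'
  rcases lt_or_gt_of_ne hmn with hlt | hlt
  · have : ((m : ℝ) + 1) ≤ (n : ℝ) := by exact_mod_cast hlt
    have := hx.2; have := hx'.1
    nlinarith
  · have : ((n : ℝ) + 1) ≤ (m : ℝ) := by exact_mod_cast hlt
    have := hx.1; have := hx'.2
    nlinarith

/-- Cauchy–Schwarz: `|disc u h n|² h ≤ ∫_{I_n} |u|²`. -/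
lemma disc_sq_le (hh : 0 < h) (hu : AEMeasurable (fun x => (‖u x‖₊ : ℝ≥0∞)) volume) :
    (‖disc u h n‖₊ : ℝ≥0∞) ^ (2 : ℝ) * ENNReal.ofReal h
      ≤ ∫⁻ x in Ioc ((n : ℝ) * h) (((n : ℝ) + 1) * h), (‖u x‖₊ : ℝ≥0∞) ^ (2 : ℝ) := by
  set s : Set ℝ := Ioc ((n : ℝ) * h) (((n : ℝ) + 1) * h) with hs
  set L : ℝ≥0∞ := ∫⁻ x in s, (‖u x‖₊ : ℝ≥0∞) ^ (2 : ℝ) with hL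
  have hms : volume s = ENNReal.ofReal h := by
    rw [hs, Real.volume_Ioc]
    congr 1; ring
  -- Hölder with p = q = 2
  have holder : (∫⁻ x in s, (‖u x‖₊ : ℝ≥0∞)) ≤ L ^ (1/2 : ℝ) * (ENNReal.ofReal h) ^ (1/2 : ℝ) := by
    have conj : Real.HolderConjugate 2 2 := Real.HolderConjugate.two_two
    have := ENNReal.lintegral_mul_le_Lp_mul_Lq (volume.restrict s) conj
      (hu.restrict) (aemeasurable_const (b := (1:ℝ≥0∞)))
    simpa [hms, hL] using this
  -- norm of the average
  have hint : (‖disc u h n‖₊ : ℝ≥0∞) ≤ (ENNReal.ofReal h)⁻¹ * ∫⁻ x in s, (‖u x‖₊ : ℝ≥0∞) := by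
    have hle : (n : ℝ) * h ≤ ((n : ℝ) + 1) * h := by nlinarith
    have hcoef : (‖(1 / h : ℂ)‖₊ : ℝ≥0∞) = (ENNReal.ofReal h)⁻¹ := by
      rw [show ((1 / h : ℂ)) = (((1 / h : ℝ)) : ℂ) by push_cast; ring]
      rw [Complex.nnnorm_real, ← enorm_eq_nnnorm, Real.enorm_eq_ofReal (by positivity), one_div,
        ENNReal.ofReal_inv_of_pos hh]
    rw [disc, intervalIntegral.integral_of_le hle, nnnorm_mul]
    push_cast
    rw [hcoef]
    gcongr
    exact enorm_integral_le_lintegral_enorm _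
  -- combine
  have h0 : ENNReal.ofReal h ≠ 0 := by simp [hh]
  have htop : ENNReal.ofReal h ≠ ⊤ := ENNReal.ofReal_ne_top
  set X := ENNReal.ofReal h with hX
  have e1 : ∀ a b : ℝ≥0∞, (a * b) ^ (2:ℝ) = a ^ (2:ℝ) * b ^ (2:ℝ) := fun a b =>
    ENNReal.mul_rpow_of_nonneg _ _ (by norm_num)
  have key : (X⁻¹ * (L ^ (1/2:ℝ) * X ^ (1/2:ℝ))) ^ (2:ℝ) * X = L := by
    calc (X⁻¹ * (L ^ (1/2:ℝ) * X ^ (1/2:ℝ))) ^ (2:ℝ) * X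
        = X⁻¹ ^ (2:ℝ) * (L ^ ((1/2:ℝ) * 2) * X ^ ((1/2:ℝ) * 2)) * X := by
          rw [e1, e1, ENNReal.rpow_mul L, ENNReal.rpow_mul X]
      _ = X⁻¹ ^ (2:ℝ) * (L * X) * X := by norm_num
      _ = L * (X⁻¹ * X) * (X⁻¹ * X) := by
          rw [show ((2:ℝ)) = ((2:ℕ):ℝ) by norm_num, ENNReal.rpow_natCast, sq]
          ring
      _ = L := by rw [ENNReal.inv_mul_cancel h0 htop]; ring
  calc (‖disc u h n‖₊ : ℝ≥0∞) ^ (2:ℝ) * X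
      ≤ (X⁻¹ * (L ^ (1/2:ℝ) * X ^ (1/2:ℝ))) ^ (2:ℝ) * X := by
        gcongr
        exact hint.trans (by gcongr)
    _ = L := key


lemma lintegral_interp_sq_le (hh : 0 < h)
    (hu : AEMeasurable (fun x => (‖u x‖₊ : ℝ≥0∞)) volume) :
    ∫⁻ x, (‖interp u h x‖₊ : ℝ≥0∞) ^ (2 : ℝ)
      ≤ 8 * ∫⁻ x, (‖u x‖₊ : ℝ≥0∞) ^ (2 : ℝ) := by
  set X := ENNReal.ofReal h with hX
  set A : ℤ → ℝ≥0∞ := fun n => (‖disc u h n‖₊ : ℝ≥0∞) ^ (2 : ℝ) with hA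
  have hpart : ∫⁻ x, (‖interp u h x‖₊ : ℝ≥0∞) ^ (2 : ℝ)
      = ∑' n : ℤ, ∫⁻ x in Ico ((n:ℝ) * h) (((n:ℝ) + 1) * h),
          (‖interp u h x‖₊ : ℝ≥0∞) ^ (2 : ℝ) := by
    rw [← setLIntegral_univ, ← iUnion_Ico_eq hh,
      lintegral_iUnion (fun n => measurableSet_Ico) (pairwise_Ico hh)]
  have hpart2 : ∫⁻ x, (‖u x‖₊ : ℝ≥0∞) ^ (2 : ℝ)
      = ∑' n : ℤ, ∫⁻ x in Ioc ((n:ℝ) * h) (((n:ℝ) + 1) * h),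
          (‖u x‖₊ : ℝ≥0∞) ^ (2 : ℝ) := by
    rw [← setLIntegral_univ, ← iUnion_Ioc_eq hh,
      lintegral_iUnion (fun n => measurableSet_Ioc) (pairwise_Ioc hh)]
  have hloc : ∀ n : ℤ, ∫⁻ x in Ico ((n:ℝ) * h) (((n:ℝ) + 1) * h),
      (‖interp u h x‖₊ : ℝ≥0∞) ^ (2 : ℝ)
      ≤ 4 * (A n + A (n + 1)) * X := by
    intro n
    have hbd : ∀ x ∈ Ico ((n:ℝ) * h) (((n:ℝ) + 1) * h),
        (‖interp u h x‖₊ : ℝ≥0∞) ^ (2 : ℝ)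
          ≤ ((‖disc u h n‖₊ : ℝ≥0∞) + (‖disc u h (n+1)‖₊ : ℝ≥0∞)) ^ (2 : ℝ) := by
      intro x hx
      have hnorm : ‖interp u h x‖ ≤ ‖disc u h n‖ + ‖disc u h (n+1)‖ := by
        rw [interp_eq_combo hh hx]
        obtain ⟨ht0, ht1⟩ := t_mem hh hx
        exact norm_combo_le ht0 ht1.le (le_add_of_nonneg_right (norm_nonneg _))
          (le_add_of_nonneg_left (norm_nonneg _))
      have : (‖interp u h x‖₊ : ℝ≥0∞)
          ≤ (‖disc u h n‖₊ : ℝ≥0∞) + (‖disc u h (n+1)‖₊ : ℝ≥0∞) := by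
        rw [← ENNReal.coe_add, ENNReal.coe_le_coe, ← NNReal.coe_le_coe]
        push_cast
        exact hnorm
      exact ENNReal.rpow_le_rpow this (by norm_num)
    calc ∫⁻ x in Ico ((n:ℝ) * h) (((n:ℝ) + 1) * h),
          (‖interp u h x‖₊ : ℝ≥0∞) ^ (2 : ℝ)
        ≤ ∫⁻ _x in Ico ((n:ℝ) * h) (((n:ℝ) + 1) * h),
            ((‖disc u h n‖₊ : ℝ≥0∞) + (‖disc u h (n+1)‖₊ : ℝ≥0∞)) ^ (2 : ℝ) :=
          setLIntegral_mono measurable_const hbd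
      _ = ((‖disc u h n‖₊ : ℝ≥0∞) + (‖disc u h (n+1)‖₊ : ℝ≥0∞)) ^ (2 : ℝ)
            * volume (Ico ((n:ℝ) * h) (((n:ℝ) + 1) * h)) := setLIntegral_const _ _
      _ = ((‖disc u h n‖₊ : ℝ≥0∞) + (‖disc u h (n+1)‖₊ : ℝ≥0∞)) ^ (2 : ℝ) * X := by
          rw [Real.volume_Ico, hX]; congr 2; ring
      _ ≤ 4 * (A n + A (n + 1)) * X := by
          gcongr
          exact sq4 _ _
  have hAX : ∀ n : ℤ, A n * X
      ≤ ∫⁻ x in Ioc ((n:ℝ) * h) (((n:ℝ) + 1) * h), (‖u x‖₊ : ℝ≥0∞) ^ (2 : ℝ) :=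
    fun n => disc_sq_le hh hu
  calc ∫⁻ x, (‖interp u h x‖₊ : ℝ≥0∞) ^ (2 : ℝ)
      = ∑' n : ℤ, ∫⁻ x in Ico ((n:ℝ) * h) (((n:ℝ) + 1) * h),
          (‖interp u h x‖₊ : ℝ≥0∞) ^ (2 : ℝ) := hpart
    _ ≤ ∑' n : ℤ, 4 * (A n + A (n + 1)) * X := ENNReal.tsum_le_tsum hloc
    _ = 4 * ((∑' n : ℤ, A n * X) + ∑' n : ℤ, A (n + 1) * X) := by
        rw [← ENNReal.tsum_add, ← ENNReal.tsum_mul_left]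
        congr 1; funext n; ring
    _ = 4 * ((∑' n : ℤ, A n * X) + ∑' n : ℤ, A n * X) := by
        congr 2
        exact (Equiv.addRight (1:ℤ)).tsum_eq (fun n => A n * X)
    _ ≤ 4 * ((∫⁻ x, (‖u x‖₊ : ℝ≥0∞) ^ (2 : ℝ)) + ∫⁻ x, (‖u x‖₊ : ℝ≥0∞) ^ (2 : ℝ)) := by
        gcongr 4 * (?_ + ?_) <;>
          · rw [hpart2]; exact ENNReal.tsum_le_tsum hAX
    _ = 8 * ∫⁻ x, (‖u x‖₊ : ℝ≥0∞) ^ (2 : ℝ) := by ring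

/-- Stability: the interpolation operator is bounded on L². -/
lemma eLpNorm_interp_le (hh : 0 < h)
    (hu : AEStronglyMeasurable u volume) :
    eLpNorm (interp u h) 2 volume ≤ 3 * eLpNorm u 2 volume := by
  rw [eLpNorm_eq_lintegral_rpow_enorm_toReal (by norm_num) (by norm_num),
    eLpNorm_eq_lintegral_rpow_enorm_toReal (by norm_num) (by norm_num)]
  simp only [ENNReal.toReal_ofNat]
  calc (∫⁻ x, (‖interp u h x‖₊ : ℝ≥0∞) ^ (2:ℝ)) ^ (1/2 : ℝ)
      ≤ (8 * ∫⁻ x, (‖u x‖₊ : ℝ≥0∞) ^ (2:ℝ)) ^ (1/2 : ℝ) := by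
        gcongr
        exact lintegral_interp_sq_le hh hu.enorm
    _ = (8:ℝ≥0∞) ^ (1/2:ℝ) * (∫⁻ x, (‖u x‖₊ : ℝ≥0∞) ^ (2:ℝ)) ^ (1/2 : ℝ) := by
        rw [ENNReal.mul_rpow_of_nonneg _ _ (by norm_num)]
    _ ≤ 3 * (∫⁻ x, (‖u x‖₊ : ℝ≥0∞) ^ (2:ℝ)) ^ (1/2 : ℝ) := by
        gcongr
        have h9 : (8:ℝ≥0∞) ≤ 9 := by norm_num
        calc (8:ℝ≥0∞) ^ (1/2:ℝ) ≤ (9:ℝ≥0∞) ^ (1/2:ℝ) := by gcongr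
          _ = ((3:ℝ≥0∞) ^ (2:ℕ)) ^ (1/2:ℝ) := by norm_num
          _ = (3:ℝ≥0∞) ^ ((2:ℝ) * (1/2:ℝ)) := by
              rw [← ENNReal.rpow_natCast (3:ℝ≥0∞) 2, ← ENNReal.rpow_mul]
              norm_num
          _ = 3 := by norm_num


variable {r : ℝ} {g : ℝ → ℂ} {m : ℤ}

lemma disc_sub_self (hh : 0 < h) (hg : Continuous g) (m : ℤ) (x : ℝ) :
    disc g h m - g x
      = (1 / h : ℂ) * ∫ y in ((m : ℝ) * h)..(((m : ℝ) + 1) * h), (g y - g x) := by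
  rw [disc, intervalIntegral.integral_sub (hg.intervalIntegrable _ _)
    intervalIntegrable_const, intervalIntegral.integral_const]
  have hc : (h : ℂ) ≠ 0 := by exact_mod_cast hh.ne'
  have : ((((m : ℝ) + 1) * h - (m : ℝ) * h) : ℝ) • g x = (h : ℂ) * g x := by
    rw [Complex.real_smul]
    push_cast
    ring_nf
  rw [this]
  field_simp

lemma norm_disc_sub_le (hh : 0 < h) (hg : Continuous g) (hr : 0 ≤ r)
    (hclose : ∀ y ∈ Ioc ((m : ℝ) * h) (((m : ℝ) + 1) * h), ‖g y - g x‖ ≤ r) :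
    ‖disc g h m - g x‖ ≤ r := by
  rw [disc_sub_self hh hg m x, norm_mul]
  have hle : (m : ℝ) * h ≤ ((m : ℝ) + 1) * h := by nlinarith
  have h1 : ‖∫ y in ((m : ℝ) * h)..(((m : ℝ) + 1) * h), (g y - g x)‖
      ≤ r * |(((m : ℝ) + 1) * h) - (m : ℝ) * h| := by
    apply intervalIntegral.norm_integral_le_of_norm_le_const
    intro y hy
    rw [uIoc_of_le hle] at hy
    exact hclose y hy
  have h2 : |(((m : ℝ) + 1) * h) - (m : ℝ) * h| = h := by
    rw [abs_of_nonneg] <;> nlinarith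
  rw [h2] at h1
  have h3 : ‖(1 / h : ℂ)‖ = 1 / h := by
    rw [show ((1 / h : ℂ)) = (((1 / h : ℝ)) : ℂ) by push_cast; ring,
      Complex.norm_real, Real.norm_eq_abs, abs_of_pos (by positivity)]
  rw [h3]
  calc (1 / h) * ‖∫ y in ((m : ℝ) * h)..(((m : ℝ) + 1) * h), (g y - g x)‖
      ≤ (1 / h) * (r * h) := by
        apply mul_le_mul_of_nonneg_left h1 (by positivity)
    _ = r := by field_simp

lemma disc_eq_zero (hg0 : ∀ y ∈ Set.uIcc ((m : ℝ) * h) (((m : ℝ) + 1) * h), g y = 0) :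
    disc g h m = 0 := by
  rw [disc, intervalIntegral.integral_congr (g := fun _ => (0 : ℂ)) hg0]
  simp

lemma self_mem_Ico (hh : 0 < h) (x : ℝ) :
    x ∈ Ico ((⌊x / h⌋ : ℝ) * h) (((⌊x / h⌋ : ℝ) + 1) * h) := by
  constructor
  · calc (⌊x / h⌋ : ℝ) * h ≤ (x / h) * h :=
        mul_le_mul_of_nonneg_right (Int.floor_le _) hh.le
      _ = x := div_mul_cancel₀ x hh.ne'
  · calc x = (x / h) * h := (div_mul_cancel₀ x hh.ne').symm
      _ < ((⌊x / h⌋ : ℝ) + 1) * h :=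
        mul_lt_mul_of_pos_right (Int.lt_floor_add_one _) hh


lemma interp_sub (hh : 0 < h)
    (hfi : ∀ a b : ℝ, IntervalIntegrable u volume a b)
    (hgi : ∀ a b : ℝ, IntervalIntegrable g volume a b) (x : ℝ) :
    interp (fun y => u y - g y) h x = interp u h x - interp g h x := by
  have hd : ∀ m : ℤ, disc (fun y => u y - g y) h m = disc u h m - disc g h m := by
    intro m
    rw [disc, disc, disc, intervalIntegral.integral_sub (hfi _ _) (hgi _ _)]
    ring
  rw [interp, interp, interp, hd, hd]
  ring

/-- Consistency: for continuous compactly supported `g`,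
the interpolation converges to `g` in `L²`. -/
lemma consistency (hg : Continuous g) (hsupp : HasCompactSupport g) :
    Tendsto (fun h : ℝ => eLpNorm (fun x => interp g h x - g x) 2 volume)
      (𝓝[>] (0 : ℝ)) (𝓝 0) := by
  obtain ⟨R0, hR0⟩ := hsupp.isBounded.subset_closedBall 0
  set R : ℝ := max R0 0 with hRdef
  have hRnn : 0 ≤ R := le_max_right _ _
  have hsub : tsupport g ⊆ Icc (-R) R := by
    intro y hy
    have := hR0 hy
    rw [Real.closedBall_eq_Icc] at this
    constructor
    · calc -R ≤ -R0 := by simp [hRdef]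
        _ ≤ y := by simpa using this.1
    · calc y ≤ 0 + R0 := this.2
        _ ≤ R := by simp [hRdef]
  rw [ENNReal.tendsto_nhds_zero]
  intro ε hε
  set S : Set ℝ := Icc (-(R + 2)) (R + 2) with hSdef
  set B : ℝ≥0∞ := (volume S) ^ (1 / 2 : ℝ) with hBdef
  have hvol : volume S = ENNReal.ofReal (2 * R + 4) := by
    rw [hSdef, Real.volume_Icc]
    congr 1; ring
  have hvol0 : volume S ≠ 0 := by
    rw [hvol]; simp only [ne_eq, ENNReal.ofReal_eq_zero, not_le]; linarith
  have hvoltop : volume S ≠ ⊤ := by rw [hvol]; exact ENNReal.ofReal_ne_top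
  have hB0 : B ≠ 0 := by
    rw [hBdef]
    simp [ENNReal.rpow_eq_zero_iff, hvol0, hvoltop]
  have hBtop : B ≠ ⊤ := by
    rw [hBdef]
    exact ENNReal.rpow_ne_top_of_nonneg (by norm_num) hvoltop
  set q : ℝ≥0∞ := (min ε B) / B with hqdef
  have hq0 : q ≠ 0 := by
    rw [hqdef, ne_eq, ENNReal.div_eq_zero_iff]
    push_neg
    exact ⟨(lt_min hε (pos_iff_ne_zero.2 hB0)).ne', hBtop⟩
  have hqtop : q ≠ ⊤ := by
    have h1 : q ≤ 1 := by
      rw [hqdef]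
      calc (min ε B) / B ≤ B / B := by gcongr; exact min_le_right _ _
        _ = 1 := ENNReal.div_self hB0 hBtop
    exact (h1.trans_lt ENNReal.one_lt_top).ne
  set r : ℝ := q.toReal with hrdef
  have hrpos : 0 < r := ENNReal.toReal_pos hq0 hqtop
  have hrB : ENNReal.ofReal r * B ≤ ε := by
    rw [hrdef, ENNReal.ofReal_toReal hqtop, hqdef,
      ENNReal.div_mul_cancel hB0 hBtop]
    exact min_le_left _ _
  obtain ⟨δ, hδpos, hδ⟩ := Metric.uniformContinuous_iff.1
    (hsupp.uniformContinuous_of_continuous hg) r hrpos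
  filter_upwards [Ioc_mem_nhdsGT_of_mem
    (show (0:ℝ) ∈ Ico (0:ℝ) (min (δ/3) 1) from
      ⟨le_refl _, lt_min (by positivity) one_pos⟩)] with h hmem
  obtain ⟨hh, hhle⟩ := hmem
  have hh3 : h ≤ δ / 3 := hhle.trans (min_le_left _ _)
  have hh1 : h ≤ 1 := hhle.trans (min_le_right _ _)
  -- pointwise bound
  have hpt : ∀ x : ℝ, ‖interp g h x - g x‖ ≤ ‖S.indicator (fun _ => (r:ℝ)) x‖ := by
    intro x
    set n : ℤ := ⌊x / h⌋ with hndef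
    have hx : x ∈ Ico ((n:ℝ) * h) (((n:ℝ) + 1) * h) := self_mem_Ico hh x
    obtain ⟨hx1, hx2⟩ := hx
    have hx2' : x < (n:ℝ) * h + h := by nlinarith
    by_cases hxS : x ∈ S
    · rw [indicator_of_mem hxS, Real.norm_eq_abs, abs_of_pos hrpos]
      rw [interp_eq_combo hh ⟨hx1, hx2⟩]
      obtain ⟨ht0, ht1⟩ := t_mem hh ⟨hx1, hx2⟩
      have key : ∀ a b c : ℂ, ∀ t : ℝ,
          ((1 - t : ℝ) : ℂ) * a + ((t : ℝ) : ℂ) * b - c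
            = ((1 - t : ℝ) : ℂ) * (a - c) + ((t : ℝ) : ℂ) * (b - c) := by
        intro a b c t; push_cast; ring
      rw [key]
      apply norm_combo_le ht0 ht1.le
      · apply norm_disc_sub_le hh hg hrpos.le
        intro y hy
        obtain ⟨hy1, hy2⟩ := hy
        have hdist : dist y x < δ := by
          rw [Real.dist_eq, abs_lt]
          constructor
          · nlinarith
          · nlinarith
        have := hδ hdist
        rw [dist_eq_norm] at this
        exact this.le
      · apply norm_disc_sub_le hh hg hrpos.le
        intro y hy
        obtain ⟨hy1, hy2⟩ := hy
        push_cast at hy1 hy2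
        have hdist : dist y x < δ := by
          rw [Real.dist_eq, abs_lt]
          constructor
          · nlinarith
          · nlinarith
        have := hδ hdist
        rw [dist_eq_norm] at this
        exact this.le
    · rw [indicator_of_notMem hxS, norm_zero]
      have hcase : x < -(R + 2) ∨ R + 2 < x := by
        rcases lt_or_ge x (-(R+2)) with hc | hc
        · exact Or.inl hc
        rcases le_or_gt x (R+2) with hc' | hc'
        · exact absurd ⟨hc, hc'⟩ hxS
        · exact Or.inr hc'
      have hgx : g x = 0 := by
        apply image_eq_zero_of_notMem_tsupport
        intro hmem'
        have hmem'' := hsub hmem'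
        rcases hcase with hc | hc
        · have := hmem''.1; linarith
        · have := hmem''.2; linarith
      have hdz : ∀ m : ℤ, (n:ℝ) ≤ (m:ℝ) → (m:ℝ) + 1 ≤ (n:ℝ) + 2 → disc g h m = 0 := by
        intro m hm1 hm2
        apply disc_eq_zero
        intro y hy
        rw [uIcc_of_le (by nlinarith)] at hy
        obtain ⟨hy1, hy2⟩ := hy
        have hmh : (n:ℝ) * h ≤ (m:ℝ) * h := by nlinarith
        have hmh2 : ((m:ℝ) + 1) * h ≤ ((n:ℝ) + 2) * h := by nlinarith
        have hyl : x - 1 < y := by nlinarith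
        have hyr : y ≤ x + 2 := by nlinarith
        apply image_eq_zero_of_notMem_tsupport
        intro hmem'
        have hmem'' := hsub hmem'
        rcases hcase with hc | hc
        · have := hmem''.1; linarith
        · have := hmem''.2; linarith
      have hz : interp g h x - g x = 0 := by
        rw [interp_eq_combo hh ⟨hx1, hx2⟩, hgx,
          hdz n le_rfl (by norm_num), hdz (n+1) (by push_cast; linarith)
            (by push_cast; linarith)]
        ring
      rw [hz, norm_zero]
  calc eLpNorm (fun x => interp g h x - g x) 2 volume
      ≤ eLpNorm (S.indicator (fun _ => (r:ℝ))) 2 volume := eLpNorm_mono hpt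
    _ = (‖(r:ℝ)‖₊ : ℝ≥0∞) * (volume S) ^ (1 / (2:ℝ≥0∞).toReal) :=
        eLpNorm_indicator_const measurableSet_Icc two_ne_zero ENNReal.ofNat_ne_top
    _ = ENNReal.ofReal r * B := by
        rw [← enorm_eq_nnnorm, Real.enorm_eq_ofReal hrpos.le, hBdef]
        norm_num
    _ ≤ ε := hrB

end InterpAux

open InterpAux

/-- The piecewise linear interpolation of the discretization of an `L²` function converges
to the function in `L²` as the lattice spacing `h` tends to `0⁺`. -/
theorem interpolation_converges_L2 (f : ℝ → ℂ) (hf : MemLp f 2 (volume : Measure ℝ))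
    (fd : ℝ → ℤ → ℂ)
    (hfd : ∀ h : ℝ, 0 < h → ∀ n : ℤ,
      fd h n = (1 / h : ℂ) * ∫ x in ((n : ℝ) * h)..(((n : ℝ) + 1) * h), f x)
    (ph : ℝ → ℝ → ℂ)
    (hph : ∀ h : ℝ, 0 < h → ∀ x : ℝ,
      ph h x = fd h ⌊x / h⌋ +
        (h⁻¹ : ℂ) * (fd h (⌊x / h⌋ + 1) - fd h ⌊x / h⌋) * ((x - (⌊x / h⌋ : ℝ) * h : ℝ) : ℂ)) :
    Tendsto (fun h : ℝ => eLpNorm (fun x => ph h x - f x) 2 (volume : Measure ℝ))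
      (𝓝[>] (0 : ℝ)) (𝓝 0) := by
  have hkey : ∀ h : ℝ, 0 < h → ∀ x : ℝ, ph h x = interp f h x := by
    intro h hh x
    rw [hph h hh x, hfd h hh, hfd h hh]
    rfl
  have hfint : ∀ a b : ℝ, IntervalIntegrable f volume a b := fun a b =>
    ((hf.locallyIntegrable one_le_two).integrableOn_isCompact
      isCompact_uIcc).intervalIntegrable
  rw [ENNReal.tendsto_nhds_zero]
  intro ε hε
  have hε8 : (ε / 8 : ℝ≥0∞) ≠ 0 := by
    rw [ne_eq, ENNReal.div_eq_zero_iff]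
    push_neg
    exact ⟨hε.ne', by norm_num⟩
  obtain ⟨g, hgsupp, hgclose, hgcont, hgmem⟩ :=
    hf.exists_hasCompactSupport_eLpNorm_sub_le ENNReal.ofNat_ne_top hε8
  have hgint : ∀ a b : ℝ, IntervalIntegrable g volume a b := fun a b =>
    hgcont.intervalIntegrable a b
  have hcons := (ENNReal.tendsto_nhds_zero.1 (consistency hgcont hgsupp)) (ε / 8)
    (pos_iff_ne_zero.2 hε8)
  filter_upwards [hcons, self_mem_nhdsWithin] with h hconsh hhpos
  replace hhpos : 0 < h := hhpos
  have hfg : eLpNorm (fun x => f x - g x) 2 volume ≤ ε / 8 := by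
    have : (fun x => f x - g x) = f - g := rfl
    rw [this]
    exact hgclose
  have hAES1 : AEStronglyMeasurable (fun x => interp f h x - interp g h x) volume :=
    ((interp_measurable hhpos).sub (interp_measurable hhpos)).aestronglyMeasurable
  have hAES2 : AEStronglyMeasurable (fun x => interp g h x - g x) volume :=
    ((interp_measurable hhpos).sub hgcont.measurable).aestronglyMeasurable
  have hAES3 : AEStronglyMeasurable (fun x => g x - f x) volume :=
    (hgcont.aestronglyMeasurable).sub hf.1
  have hsplit : (fun x => ph h x - f x)
      = fun x => ((interp f h x - interp g h x) + (interp g h x - g x)) + (g x - f x) := by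
    funext x
    rw [hkey h hhpos x]
    ring
  rw [hsplit]
  calc eLpNorm (fun x =>
        ((interp f h x - interp g h x) + (interp g h x - g x)) + (g x - f x)) 2 volume
      ≤ eLpNorm (fun x => (interp f h x - interp g h x) + (interp g h x - g x)) 2 volume
          + eLpNorm (fun x => g x - f x) 2 volume :=
        eLpNorm_add_le (hAES1.add hAES2) hAES3 one_le_two
    _ ≤ (eLpNorm (fun x => interp f h x - interp g h x) 2 volume
          + eLpNorm (fun x => interp g h x - g x) 2 volume)
          + eLpNorm (fun x => g x - f x) 2 volume := by
        gcongr
        exact eLpNorm_add_le hAES1 hAES2 one_le_two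
    _ ≤ (3 * (ε / 8) + ε / 8) + ε / 8 := by
        gcongr
        · -- stability applied to f - g
          have heq : (fun x => interp f h x - interp g h x)
              = interp (fun y => f y - g y) h := by
            funext x
            rw [interp_sub hhpos hfint hgint x]
          rw [heq]
          calc eLpNorm (interp (fun y => f y - g y) h) 2 volume
              ≤ 3 * eLpNorm (fun y => f y - g y) 2 volume :=
                eLpNorm_interp_le hhpos (hf.1.sub hgcont.aestronglyMeasurable)
            _ ≤ 3 * (ε / 8) := by gcongr
        · rw [show (fun x => g x - f x) = g - f from rfl, eLpNorm_sub_comm]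
          exact hgclose
    _ ≤ ε := by
        have h58 : (3 * (ε / 8) + ε / 8) + ε / 8 = 5 * (ε / 8) := by ring
        rw [h58]
        calc (5:ℝ≥0∞) * (ε / 8) ≤ 8 * (ε / 8) := by gcongr <;> norm_num
          _ = ε := ENNReal.mul_div_cancel' (by norm_num) (by norm_num)
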